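/- Over F_2, let g(x) = Σ_{r=0}^{s} g_r x^r divide the trinomial x^n + x^i + 1 (0 < i < n) and suppose g generates a dual-containing polycyclic code C (i.e., C^⊥ ⊆ C, where C is the length-n code with generator matrix whose rows are the shifts of the coefficient vector of g). Then g = 1, i.e., C = F_2^n is the trivial code. In particular, there are no nontrivial dual-containing polycyclic codes associated with trinomials over F_2. -/

import Mathlib

open Polynomial

private noncomputable def dotB (n : ℕ) :
    LinearMap.BilinForm (ZMod 2) (Fin n → ZMod 2) :=
  LinearMap.mk₂ (ZMod 2) dotProduct
    (fun m₁ m₂ n => add_dotProduct m₁ m₂ n)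
    (fun c m n => smul_dotProduct c m n)
    (fun m n₁ n₂ => dotProduct_add m n₁ n₂)
    (fun c m n => dotProduct_smul c m n)

lemma dotB_apply {n : ℕ} (v w : Fin n → ZMod 2) :
    dotB n v w = dotProduct v w := by simp [dotB]

lemma dotB_nondeg {n : ℕ} : (dotB n).Nondegenerate := by
  apply (LinearMap.IsRefl.nondegenerate_iff_separatingLeft (by
    intro v w h; rw [dotB_apply] at h ⊢; rwa [dotProduct_comm])).mpr
  intro v hv
  funext t
  have := hv (Pi.single t 1)
  simpa [dotB_apply, dotProduct_single] using this

lemma dotB_refl {n : ℕ} : (dotB n).IsRefl := by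
  intro v w h
  rw [dotB_apply] at h ⊢
  rwa [dotProduct_comm]

noncomputable def vecPoly (n : ℕ) : (Fin n → ZMod 2) →ₗ[ZMod 2] (ZMod 2)[X] :=
  ∑ t : Fin n, (LinearMap.proj t).smulRight ((X : (ZMod 2)[X]) ^ (t : ℕ))

lemma vecPoly_apply {n : ℕ} (v : Fin n → ZMod 2) :
    vecPoly n v = ∑ t : Fin n, v t • (X : (ZMod 2)[X]) ^ (t : ℕ) := by
  simp [vecPoly]

lemma vecPoly_of_lt {n : ℕ} (p : (ZMod 2)[X]) (hp : p.natDegree < n) :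
    vecPoly n (fun t : Fin n => p.coeff t) = p := by
  rw [vecPoly_apply, Fin.sum_univ_eq_sum_range (fun t => p.coeff t • (X : (ZMod 2)[X]) ^ t)]
  conv_rhs => rw [p.as_sum_range' n hp]
  refine Finset.sum_congr rfl fun t _ => ?_
  rw [smul_eq_C_mul, C_mul_X_pow_eq_monomial]

theorem stmt_19 (n i : ℕ) (hi : 0 < i) (hin : i < n) (g : (ZMod 2)[X])
    (hdvd : g ∣ X ^ n + X ^ i + 1) :
    let s := g.natDegree
    let C : Submodule (ZMod 2) (Fin n → ZMod 2) :=
      Submodule.span (ZMod 2)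
        (Set.range fun j : Fin (n - s) => fun t : Fin n => (X ^ (j : ℕ) * g).coeff t)
    (∀ v : Fin n → ZMod 2, (∀ c ∈ C, dotProduct v c = 0) → v ∈ C) →
    g = 1 := by
  intro s C hC
  have hs : s = g.natDegree := rfl
  have hn : 0 < n := hi.trans hin
  have hfc0 : (X ^ n + X ^ i + (1 : (ZMod 2)[X])).coeff 0 = 1 := by
    simp [coeff_X_pow, hn.ne, hi.ne]
  have hfne : (X ^ n + X ^ i + (1 : (ZMod 2)[X])) ≠ 0 := by
    intro h; rw [h] at hfc0; simp at hfc0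
  have hgne : g ≠ 0 := by rintro rfl; exact hfne (zero_dvd_iff.mp hdvd)
  -- Step 1: the all-ones vector is in C
  have hone : (fun _ => (1 : ZMod 2)) ∈ C := by
    rw [← (dotB n).orthogonal_orthogonal dotB_nondeg dotB_refl C,
      LinearMap.BilinForm.mem_orthogonal_iff]
    intro u hu
    have hu' : ∀ c ∈ C, dotProduct u c = 0 := by
      intro c hc
      have h : dotB n c u = 0 := (LinearMap.BilinForm.mem_orthogonal_iff.mp hu) c hc
      rw [dotB_apply] at h
      rw [dotProduct_comm]
      exact h
    have huC : u ∈ C := hC u hu'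
    have h2 : dotProduct u u = 0 := hu' u huC
    show dotB n u (fun _ => 1) = 0
    rw [dotB_apply]
    rw [show dotProduct u (fun _ => 1) = dotProduct u u from
      Finset.sum_congr rfl fun t _ => by
        have hmul : ∀ a : ZMod 2, a * a = a := by decide
        rw [mul_one, hmul]]
    exact h2
  -- Step 2: g divides ∑_{t<n} X^t
  have hsub : C ≤ Submodule.comap (vecPoly n)
      ((Ideal.span {g}).restrictScalars (ZMod 2)) := by
    have hCd : C = Submodule.span (ZMod 2)
        (Set.range fun j : Fin (n - s) => fun t : Fin n => (X ^ (j : ℕ) * g).coeff t) := rfl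
    rw [hCd, Submodule.span_le]
    rintro _ ⟨j, rfl⟩
    beta_reduce
    have hj : (j : ℕ) < n - g.natDegree := j.isLt
    have hdeg : (X ^ (j : ℕ) * g).natDegree < n := by
      rw [natDegree_mul (pow_ne_zero _ X_ne_zero) hgne, natDegree_X_pow]
      omega
    simp only [SetLike.mem_coe, Submodule.mem_comap, Submodule.restrictScalars_mem]
    rw [vecPoly_of_lt _ hdeg]
    exact Ideal.mem_span_singleton.mpr (dvd_mul_left g _)
  have hdvdsum : g ∣ ∑ t ∈ Finset.range n, (X : (ZMod 2)[X]) ^ t := by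
    have h := hsub hone
    simp only [Submodule.mem_comap, Submodule.restrictScalars_mem] at h
    rw [vecPoly_apply] at h
    rw [Ideal.mem_span_singleton] at h
    simpa [Fin.sum_univ_eq_sum_range (fun t => (X : (ZMod 2)[X]) ^ t)] using h
  -- Step 3: g ∣ X^n - 1, hence g ∣ X^i
  have hXn : g ∣ (X : (ZMod 2)[X]) ^ n - 1 := by
    have h := hdvdsum.mul_right ((X : (ZMod 2)[X]) - 1)
    rwa [geom_sum_mul] at h
  have h2 : (1 + 1 : (ZMod 2)[X]) = 0 := by
    have hz : (1 + 1 : ZMod 2) = 0 := by decide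
    rw [← Polynomial.C_1, ← Polynomial.C_add, hz, Polynomial.C_0]
  have hXi : g ∣ (X : (ZMod 2)[X]) ^ i := by
    have h := dvd_sub hdvd hXn
    have he : (X ^ n + X ^ i + 1 : (ZMod 2)[X]) - ((X : (ZMod 2)[X]) ^ n - 1) = X ^ i := by
      linear_combination h2
    rwa [he] at h
  -- Step 4: coprimality forces g to be a unit
  have hcop : IsCoprime (X : (ZMod 2)[X]) (X ^ n + X ^ i + 1) := by
    refine ⟨-((X : (ZMod 2)[X]) ^ (n - 1) + X ^ (i - 1)), 1, ?_⟩
    have h1 : (X : (ZMod 2)[X]) ^ (n - 1) * X = X ^ n := by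
      rw [← pow_succ]; congr 1; omega
    have hh2 : (X : (ZMod 2)[X]) ^ (i - 1) * X = X ^ i := by
      rw [← pow_succ]; congr 1; omega
    linear_combination -h1 - hh2
  have hu : IsUnit g := (hcop.pow_left).isUnit_of_dvd' hXi hdvd
  obtain ⟨r, hr, hrg⟩ := Polynomial.isUnit_iff.mp hu
  have hr1 : r = 1 := by
    have hne : r ≠ 0 := hr.ne_zero
    have hall : ∀ x : ZMod 2, x ≠ 0 → x = 1 := by decide
    exact hall r hne
  rw [← hrg, hr1, map_one]
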